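/- arXiv:1906.02164 — 5 statements merged into one kernel-verified Lean document; each statement's English description precedes it below -/
import Mathlib

section
/- Let X be a real-valued random variable on a finite set Ω with |X| ≤ r for some r > 0. Then |E[X³] − E[X²]·E[X]| ≤ 2r·(E[X²] − E[X]²). -/
/-- If `X` is a random variable on a finite set `Ω` with pmf `p` and `|X| ≤ r`,
then `|E[X³] − E[X²]·E[X]| ≤ 2r·(E[X²] − E[X]²)`. -/
theorem third_moment_bound {Ω : Type*} [Fintype Ω] (p : Ω → ℝ) (X : Ω → ℝ) (r : ℝ)
    (hr : 0 < r) (hp : ∀ α, 0 ≤ p α) (hp1 : ∑ α, p α = 1)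
    (hX : ∀ α, |X α| ≤ r) :
    |(∑ α, p α * (X α) ^ 3) - (∑ α, p α * (X α) ^ 2) * (∑ α, p α * X α)| ≤
      2 * r * ((∑ α, p α * (X α) ^ 2) - (∑ α, p α * X α) ^ 2) := by
  set μ := ∑ α, p α * X α with hμ
  have hμr : |μ| ≤ r := by
    calc |μ| ≤ ∑ α, |p α * X α| := Finset.abs_sum_le_sum_abs _ _
      _ ≤ ∑ α, p α * r := by
          apply Finset.sum_le_sum; intro i _
          rw [abs_mul, abs_of_nonneg (hp i)]
          exact mul_le_mul_of_nonneg_left (hX i) (hp i)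
      _ = r := by rw [← Finset.sum_mul, hp1, one_mul]
  have key : (∑ α, p α * (X α) ^ 3) - (∑ α, p α * (X α) ^ 2) * μ
      = ∑ α, p α * ((X α - μ) ^ 2 * (X α + μ)) := by
    have h : ∀ α, p α * ((X α - μ) ^ 2 * (X α + μ))
        = p α * X α ^ 3 - μ * (p α * X α ^ 2) - μ ^ 2 * (p α * X α) + μ ^ 3 * p α := by
      intro α; ring
    simp_rw [h, Finset.sum_add_distrib, Finset.sum_sub_distrib, ← Finset.mul_sum, hp1, ← hμ]
    ring
  have var : (∑ α, p α * (X α) ^ 2) - μ ^ 2 = ∑ α, p α * (X α - μ) ^ 2 := by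
    have h : ∀ α, p α * (X α - μ) ^ 2
        = p α * X α ^ 2 - 2 * μ * (p α * X α) + μ ^ 2 * p α := by
      intro α; ring
    simp_rw [h, Finset.sum_add_distrib, Finset.sum_sub_distrib, ← Finset.mul_sum, hp1, ← hμ]
    ring
  rw [key, var, Finset.mul_sum]
  calc |∑ α, p α * ((X α - μ) ^ 2 * (X α + μ))|
      ≤ ∑ α, |p α * ((X α - μ) ^ 2 * (X α + μ))| := Finset.abs_sum_le_sum_abs _ _
    _ ≤ ∑ α, 2 * r * (p α * (X α - μ) ^ 2) := by
        apply Finset.sum_le_sum; intro i _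
        rw [abs_mul, abs_mul, abs_of_nonneg (hp i), abs_of_nonneg (sq_nonneg _)]
        have hb : |X i + μ| ≤ 2 * r := by
          calc |X i + μ| ≤ |X i| + |μ| := abs_add_le _ _
            _ ≤ r + r := add_le_add (hX i) hμr
            _ = 2 * r := by ring
        calc p i * ((X i - μ) ^ 2 * |X i + μ|)
            ≤ p i * ((X i - μ) ^ 2 * (2 * r)) := by
              apply mul_le_mul_of_nonneg_left _ (hp i)
              exact mul_le_mul_of_nonneg_left hb (sq_nonneg _)
          _ = 2 * r * (p i * (X i - μ) ^ 2) := by ring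
end

section
/- Let v₁, v₂ be probability distributions with protected attribute Z ∈ {0,1} and class label Y, and 0 < τ₂ ≤ τ₁ ≤ 1, such that v_i(Z=0) = τ_i·v_i(Z=1) and v_i(Y=y, Z=0) = τ_i·v_i(Y=y, Z=1) for i = 1,2 and fixed label y. Then for any C ∈ [0,1], the mixture q = C·v₁ + (1−C)·v₂ satisfies q(Y=y | Z=z₁) ≥ τ₁·τ₂·q(Y=y | Z=z₂) for all z₁, z₂ ∈ {0,1} (assuming all conditioning events have positive probability). -/
open Finset

set_option maxHeartbeats 2000000 in
/-- Statistical-rate guarantee for a mixture `q = C·v₁ + (1−C)·v₂`: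
`q(Y=y | Z=z₁) ≥ τ₁·τ₂·q(Y=y | Z=z₂)` for all `z₁, z₂ ∈ {0,1}`. -/
theorem mixture_statistical_rate {Ω 𝒴 : Type*} [Fintype Ω] [DecidableEq 𝒴]
    (Zf : Ω → Bool) (Yf : Ω → 𝒴) (y : 𝒴)
    (v₁ v₂ : Ω → ℝ) (hv₁0 : ∀ α, 0 ≤ v₁ α) (hv₁1 : ∑ α, v₁ α = 1)
    (hv₂0 : ∀ α, 0 ≤ v₂ α) (hv₂1 : ∑ α, v₂ α = 1)
    (τ₁ τ₂ : ℝ) (hτ₂ : 0 < τ₂) (hτ : τ₂ ≤ τ₁) (hτ₁ : τ₁ ≤ 1)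
    (h1Z : ∑ α ∈ univ.filter (fun α => Zf α = false), v₁ α =
      τ₁ * ∑ α ∈ univ.filter (fun α => Zf α = true), v₁ α)
    (h2Z : ∑ α ∈ univ.filter (fun α => Zf α = false), v₂ α =
      τ₂ * ∑ α ∈ univ.filter (fun α => Zf α = true), v₂ α)
    (h1YZ : ∑ α ∈ univ.filter (fun α => Yf α = y ∧ Zf α = false), v₁ α =
      τ₁ * ∑ α ∈ univ.filter (fun α => Yf α = y ∧ Zf α = true), v₁ α)
    (h2YZ : ∑ α ∈ univ.filter (fun α => Yf α = y ∧ Zf α = false), v₂ α =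
      τ₂ * ∑ α ∈ univ.filter (fun α => Yf α = y ∧ Zf α = true), v₂ α)
    (C : ℝ) (hC0 : 0 ≤ C) (hC1 : C ≤ 1)
    (q : Ω → ℝ) (hq : ∀ α, q α = C * v₁ α + (1 - C) * v₂ α)
    (hposZ : ∀ z, 0 < ∑ α ∈ univ.filter (fun α => Zf α = z), q α) :
    ∀ z₁ z₂ : Bool,
      (∑ α ∈ univ.filter (fun α => Yf α = y ∧ Zf α = z₁), q α) /
        (∑ α ∈ univ.filter (fun α => Zf α = z₁), q α) ≥
      τ₁ * τ₂ * ((∑ α ∈ univ.filter (fun α => Yf α = y ∧ Zf α = z₂), q α) /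
        (∑ α ∈ univ.filter (fun α => Zf α = z₂), q α)) := by

  -- sums of q decompose
  have hs : ∀ S : Finset Ω, ∑ α ∈ S, q α
      = C * ∑ α ∈ S, v₁ α + (1 - C) * ∑ α ∈ S, v₂ α := by
    intro S
    simp only [hq, Finset.sum_add_distrib, Finset.mul_sum]
  set A₁ := ∑ α ∈ univ.filter (fun α => Yf α = y ∧ Zf α = true), v₁ α with hA₁
  set A₂ := ∑ α ∈ univ.filter (fun α => Yf α = y ∧ Zf α = true), v₂ α with hA₂
  set B₁ := ∑ α ∈ univ.filter (fun α => Zf α = true), v₁ α with hB₁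
  set B₂ := ∑ α ∈ univ.filter (fun α => Zf α = true), v₂ α with hB₂
  have hA₁0 : 0 ≤ A₁ := Finset.sum_nonneg fun α _ => hv₁0 α
  have hA₂0 : 0 ≤ A₂ := Finset.sum_nonneg fun α _ => hv₂0 α
  have hB₁0 : 0 ≤ B₁ := Finset.sum_nonneg fun α _ => hv₁0 α
  have hB₂0 : 0 ≤ B₂ := Finset.sum_nonneg fun α _ => hv₂0 α
  have hNt : ∑ α ∈ univ.filter (fun α => Yf α = y ∧ Zf α = true), q α
      = C * A₁ + (1 - C) * A₂ := hs _
  have hNf : ∑ α ∈ univ.filter (fun α => Yf α = y ∧ Zf α = false), q α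
      = C * (τ₁ * A₁) + (1 - C) * (τ₂ * A₂) := by
    rw [hs _, h1YZ, h2YZ]
  have hDt : ∑ α ∈ univ.filter (fun α => Zf α = true), q α
      = C * B₁ + (1 - C) * B₂ := hs _
  have hDf : ∑ α ∈ univ.filter (fun α => Zf α = false), q α
      = C * (τ₁ * B₁) + (1 - C) * (τ₂ * B₂) := by
    rw [hs _, h1Z, h2Z]
  have hDtpos : (0:ℝ) < C * B₁ + (1 - C) * B₂ := hDt ▸ hposZ true
  have hDfpos : (0:ℝ) < C * (τ₁ * B₁) + (1 - C) * (τ₂ * B₂) := hDf ▸ hposZ false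
  have hτ₁0 : 0 < τ₁ := lt_of_lt_of_le hτ₂ hτ
  have hC1' : (0:ℝ) ≤ 1 - C := sub_nonneg.2 hC1
  have hNt0 : (0:ℝ) ≤ C * A₁ + (1 - C) * A₂ :=
    add_nonneg (mul_nonneg hC0 hA₁0) (mul_nonneg hC1' hA₂0)
  have hNf0 : (0:ℝ) ≤ C * (τ₁ * A₁) + (1 - C) * (τ₂ * A₂) :=
    add_nonneg (mul_nonneg hC0 (mul_nonneg hτ₁0.le hA₁0))
      (mul_nonneg hC1' (mul_nonneg hτ₂.le hA₂0))
  have hττ : τ₁ * τ₂ ≤ 1 := by nlinarith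
  have hτsq : τ₁ * τ₁ ≤ 1 := by nlinarith
  have hN1 : τ₂ * (C * A₁ + (1 - C) * A₂) ≤ C * (τ₁ * A₁) + (1 - C) * (τ₂ * A₂) := by
    nlinarith [mul_nonneg (mul_nonneg (sub_nonneg.2 hτ) hC0) hA₁0]
  have hN2 : C * (τ₁ * A₁) + (1 - C) * (τ₂ * A₂) ≤ τ₁ * (C * A₁ + (1 - C) * A₂) := by
    nlinarith [mul_nonneg (mul_nonneg (sub_nonneg.2 hτ) hC1') hA₂0]
  have hD1 : τ₂ * (C * B₁ + (1 - C) * B₂) ≤ C * (τ₁ * B₁) + (1 - C) * (τ₂ * B₂) := by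
    nlinarith [mul_nonneg (mul_nonneg (sub_nonneg.2 hτ) hC0) hB₁0]
  have hD2 : C * (τ₁ * B₁) + (1 - C) * (τ₂ * B₂) ≤ τ₁ * (C * B₁ + (1 - C) * B₂) := by
    nlinarith [mul_nonneg (mul_nonneg (sub_nonneg.2 hτ) hC1') hB₂0]
  -- abstract the four mixture quantities
  set Nt : ℝ := C * A₁ + (1 - C) * A₂ with hNtdef
  set Nf : ℝ := C * (τ₁ * A₁) + (1 - C) * (τ₂ * A₂) with hNfdef
  set Dt : ℝ := C * B₁ + (1 - C) * B₂ with hDtdef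
  set Df : ℝ := C * (τ₁ * B₁) + (1 - C) * (τ₂ * B₂) with hDfdef
  intro z₁ z₂
  rcases z₁ <;> rcases z₂ <;> rw [ge_iff_le] <;>
    simp only [hNt, hNf, hDt, hDf] <;>
    rw [mul_div_assoc', div_le_div_iff₀ (by assumption) (by assumption)]
  · nlinarith [mul_nonneg hNf0 hDfpos.le]
  · nlinarith [mul_le_mul_of_nonneg_left hD2
        (mul_nonneg (mul_nonneg hτ₁0.le hτ₂.le) hNt0),
      mul_le_mul_of_nonneg_right hN1 hDtpos.le,
      mul_le_mul_of_nonneg_right hτsq (mul_nonneg (mul_nonneg hτ₂.le hNt0) hDtpos.le)]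
  · nlinarith [mul_le_mul_of_nonneg_right
        (mul_le_mul_of_nonneg_left hN2 (mul_nonneg hτ₁0.le hτ₂.le)) hDtpos.le,
      mul_le_mul_of_nonneg_left hD1 hNt0,
      mul_le_mul_of_nonneg_right hτsq (mul_nonneg (mul_nonneg hτ₂.le hNt0) hDtpos.le)]
  · nlinarith [mul_nonneg hNt0 hDtpos.le]
end

section
/- Let p and q be probability distributions on a finite domain with protected attribute Z ∈ {0,1} and class label Y, let τ ∈ [0,1], C ∈ (0,1], and let δ = max_{z∈{0,1}} |p(Y=y, Z=z) − q(Y=y, Z=z)|. Suppose q(Y=y, Z=0) ≥ τ·q(Y=y, Z=1), and q(Y=y, Z=z) ≥ C/4 for both z ∈ {0,1}. Then p(Y=y, Z=0)/p(Y=y, Z=1) ≥ τ − δ·(1+τ)/(C/4 + δ). -/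
open Finset

/-- Statistical-rate transfer from the prior `q` to the max-entropy distribution
`p`: if `q(Y=y,Z=0) ≥ τ·q(Y=y,Z=1)` and `q(Y=y,Z=z) ≥ C/4`, then
`p(Y=y,Z=0)/p(Y=y,Z=1) ≥ τ − δ(1+τ)/(C/4+δ)` with
`δ = max_z |p(Y=y,Z=z) − q(Y=y,Z=z)|`. -/
theorem joint_ratio_transfer {Ω 𝒴 : Type*} [Fintype Ω] [DecidableEq 𝒴]
    (Zf : Ω → Bool) (Yf : Ω → 𝒴) (y : 𝒴)
    (p q : Ω → ℝ) (hp0 : ∀ α, 0 ≤ p α) (hp1 : ∑ α, p α = 1)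
    (hq0 : ∀ α, 0 ≤ q α) (hq1 : ∑ α, q α = 1)
    (τ C : ℝ) (hτ0 : 0 ≤ τ) (hτ1 : τ ≤ 1) (hC0 : 0 < C) (hC1 : C ≤ 1)
    (pJ qJ : Bool → ℝ)
    (hpJ : ∀ z, pJ z = ∑ α ∈ univ.filter (fun α => Yf α = y ∧ Zf α = z), p α)
    (hqJ : ∀ z, qJ z = ∑ α ∈ univ.filter (fun α => Yf α = y ∧ Zf α = z), q α)
    (δ : ℝ) (hδ : δ = max |pJ false - qJ false| |pJ true - qJ true|)
    (hqrate : qJ false ≥ τ * qJ true)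
    (hqlb : ∀ z, qJ z ≥ C / 4)
    (hppos : 0 < pJ true) :
    pJ false / pJ true ≥ τ - δ * (1 + τ) / (C / 4 + δ) := by
  have hδ0 : 0 ≤ δ := hδ ▸ le_trans (abs_nonneg _) (le_max_left _ _)
  have hpf0 : 0 ≤ pJ false := by
    rw [hpJ]; exact Finset.sum_nonneg fun α _ => hp0 α
  have h1 := abs_le.mp (hδ ▸ le_max_left |pJ false - qJ false| |pJ true - qJ true|)
  have h2 := abs_le.mp (hδ ▸ le_max_right |pJ false - qJ false| |pJ true - qJ true|)
  have hf : qJ false - δ ≤ pJ false := by linarith [h1.1]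
  have ht : pJ true ≤ qJ true + δ := by linarith [h2.2]
  have hq1 : C / 4 ≤ qJ true := hqlb true
  have hC4 : 0 < C / 4 := by linarith
  have hd1 : 0 < C / 4 + δ := by linarith
  have hd2 : 0 < qJ true + δ := by linarith
  have key : (τ * qJ true - δ) / (qJ true + δ) ≤ pJ false / pJ true := by
    rcases le_or_gt (τ * qJ true - δ) 0 with h | h
    · exact le_trans (div_nonpos_of_nonpos_of_nonneg h hd2.le)
        (div_nonneg hpf0 hppos.le)
    · exact div_le_div₀ hpf0 (by linarith) hppos (by linarith)
  have e : (τ * qJ true - δ) / (qJ true + δ) = τ - δ * (1 + τ) / (qJ true + δ) := by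
    field_simp; ring
  have mono : δ * (1 + τ) / (qJ true + δ) ≤ δ * (1 + τ) / (C / 4 + δ) := by
    apply div_le_div_of_nonneg_left (by positivity) hd1 (by linarith)
  linarith [key, e ▸ key]
end

section
/- Let Ω = {0,1}^n, q : Ω → [0,1] a probability distribution, θ ∈ ℝ^n, and define h(λ) = log(Σ_{α∈Ω} q(α)·e^{⟨λ, α−θ⟩}). Then h is 4n-second-order robust: for all λ₀, λ₁ ∈ ℝ^n with ‖λ₁‖_∞ ≤ 1, |D³h(λ₀)[λ₁,λ₁,λ₁]| ≤ 4n·D²h(λ₀)[λ₁,λ₁], where D^k h(λ₀)[λ₁,…,λ₁] denotes the k-th derivative of t ↦ h(λ₀ + t·λ₁) at t = 0. -/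
open Finset

lemma logsumexp_robust {ι : Type*} [Fintype ι] (w c : ι → ℝ) (hw : ∀ a, 0 ≤ w a)
    (hpos : 0 < ∑ a, w a) (r : ℝ) (hr : ∀ a b, |c a - c b| ≤ r) :
    |iteratedDeriv 3 (fun t : ℝ => Real.log (∑ a, w a * Real.exp (t * c a))) 0| ≤
      r * iteratedDeriv 2 (fun t : ℝ => Real.log (∑ a, w a * Real.exp (t * c a))) 0 := by
  classical
  set Z : ℕ → ℝ → ℝ := fun k t => ∑ a, w a * c a ^ k * Real.exp (t * c a) with hZdef
  have hZ0 : (fun t : ℝ => Real.log (∑ a, w a * Real.exp (t * c a)))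
      = fun t => Real.log (Z 0 t) := by
    funext t; simp [hZdef]
  have hZpos : ∀ t, 0 < Z 0 t := by
    intro t
    have : Z 0 t = ∑ a, w a * Real.exp (t * c a) := by simp [hZdef]
    rw [this]
    obtain ⟨a, ha⟩ : ∃ a, 0 < w a := by
      by_contra hcon
      push_neg at hcon
      have : ∑ a, w a ≤ 0 := Finset.sum_nonpos (fun a _ => hcon a)
      linarith
    refine Finset.sum_pos' (fun b _ => mul_nonneg (hw b) (Real.exp_nonneg _)) ⟨a, Finset.mem_univ a, ?_⟩
    positivity
  have hZne : ∀ t, Z 0 t ≠ 0 := fun t => (hZpos t).ne'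
  have hZd : ∀ k t, HasDerivAt (Z k) (Z (k + 1) t) t := by
    intro k t
    have key : HasDerivAt (fun t : ℝ => ∑ a, w a * c a ^ k * Real.exp (t * c a))
        (∑ a, w a * c a ^ (k + 1) * Real.exp (t * c a)) t := by
      refine HasDerivAt.fun_sum (𝕜 := ℝ) (F := ℝ) fun a _ => ?_
      have h1 : HasDerivAt (fun t : ℝ => Real.exp (t * c a))
          (Real.exp (t * c a) * c a) t := (hasDerivAt_mul_const (c a)).exp
      have h2 := h1.const_mul (w a * c a ^ k)
      rw [show w a * c a ^ (k + 1) * Real.exp (t * c a) = w a * c a ^ k * (Real.exp (t * c a) * c a) by ring]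
      exact h2
    exact key
  -- first derivative
  have hg1 : ∀ t, HasDerivAt (fun t => Real.log (Z 0 t)) (Z 1 t / Z 0 t) t :=
    fun t => (hZd 0 t).log (hZne t)
  have hd1 : deriv (fun t => Real.log (Z 0 t)) = fun t => Z 1 t / Z 0 t :=
    funext fun t => (hg1 t).deriv
  -- second derivative
  have hg2 : ∀ t, HasDerivAt (fun t => Z 1 t / Z 0 t)
      (Z 2 t / Z 0 t - (Z 1 t / Z 0 t) ^ 2) t := by
    intro t
    have h1 := (hZd 1 t).div (hZd 0 t) (hZne t)
    have e : (Z 2 t * Z 0 t - Z 1 t * Z 1 t) / Z 0 t ^ 2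
        = Z 2 t / Z 0 t - (Z 1 t / Z 0 t) ^ 2 := by
      have h0 := hZne t
      field_simp
    exact e ▸ h1
  have hd2 : deriv (fun t => Z 1 t / Z 0 t)
      = fun t => Z 2 t / Z 0 t - (Z 1 t / Z 0 t) ^ 2 :=
    funext fun t => (hg2 t).deriv
  -- third derivative at 0
  have hg3 : HasDerivAt (fun t => Z 2 t / Z 0 t - (Z 1 t / Z 0 t) ^ 2)
      (Z 3 0 / Z 0 0 - 3 * (Z 2 0 * Z 1 0) / Z 0 0 ^ 2 + 2 * (Z 1 0 / Z 0 0) ^ 3) 0 := by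
    have ha := (hZd 2 0).div (hZd 0 0) (hZne 0)
    have hb := (hg2 0).pow 2
    have h1 := ha.sub hb
    have e : (Z 3 0 * Z 0 0 - Z 2 0 * Z 1 0) / Z 0 0 ^ 2
        - (2 : ℕ) * (Z 1 0 / Z 0 0) ^ (2 - 1) * (Z 2 0 / Z 0 0 - (Z 1 0 / Z 0 0) ^ 2)
        = Z 3 0 / Z 0 0 - 3 * (Z 2 0 * Z 1 0) / Z 0 0 ^ 2 + 2 * (Z 1 0 / Z 0 0) ^ 3 := by
      have h0 := hZne 0
      norm_num
      field_simp
      ring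
    exact e ▸ h1
  -- evaluate iterated derivatives
  rw [hZ0]
  have i2 : iteratedDeriv 2 (fun t => Real.log (Z 0 t)) 0
      = Z 2 0 / Z 0 0 - (Z 1 0 / Z 0 0) ^ 2 := by
    rw [show (2 : ℕ) = 1 + 1 from rfl, iteratedDeriv_succ, iteratedDeriv_one, hd1, hd2]
  have i2f : iteratedDeriv 2 (fun t => Real.log (Z 0 t))
      = fun t => Z 2 t / Z 0 t - (Z 1 t / Z 0 t) ^ 2 := by
    rw [show (2 : ℕ) = 1 + 1 from rfl, iteratedDeriv_succ, iteratedDeriv_one, hd1, hd2]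
  have i3 : iteratedDeriv 3 (fun t => Real.log (Z 0 t)) 0
      = Z 3 0 / Z 0 0 - 3 * (Z 2 0 * Z 1 0) / Z 0 0 ^ 2 + 2 * (Z 1 0 / Z 0 0) ^ 3 := by
    rw [show (3 : ℕ) = 2 + 1 from rfl, iteratedDeriv_succ, i2f]
    exact hg3.deriv
  rw [i2, i3]
  -- now the moment computation
  set S := Z 0 0 with hS
  have hSpos : 0 < S := hZpos 0
  set p : ι → ℝ := fun a => w a / S with hp
  have hp0 : ∀ a, 0 ≤ p a := fun a => div_nonneg (hw a) hSpos.le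
  have hZk : ∀ k : ℕ, Z k 0 = ∑ a, w a * c a ^ k := by
    intro k; simp [hZdef]
  have hp1 : ∑ a, p a = 1 := by
    have h0 : S = ∑ a, w a := by rw [hS, hZk 0]; simp
    rw [hp]
    rw [← Finset.sum_div, ← h0, div_self hSpos.ne']
  set m : ℕ → ℝ := fun k => ∑ a, p a * c a ^ k with hm
  have hZm : ∀ k : ℕ, Z k 0 = S * m k := by
    intro k
    rw [hZk, hm]
    rw [Finset.mul_sum]
    congr 1; funext a
    rw [hp]
    field_simp
  set μ := m 1 with hμ
  -- central moments
  have hμ' : μ = ∑ a, p a * c a := by rw [hμ, hm]; simp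
  have e2 : Z 2 0 / Z 0 0 - (Z 1 0 / Z 0 0) ^ 2 = ∑ a, p a * (c a - μ) ^ 2 := by
    have : ∑ a, p a * (c a - μ) ^ 2
        = ∑ a, (p a * c a ^ 2 - 2 * μ * (p a * c a) + μ ^ 2 * p a) := by
      apply Finset.sum_congr rfl; intro a _; ring
    rw [this, Finset.sum_add_distrib, Finset.sum_sub_distrib, ← Finset.mul_sum,
      ← Finset.mul_sum, hp1, ← hμ']
    have hm2 : ∑ a, p a * c a ^ 2 = m 2 := rfl
    rw [hm2, hZm 2, hZm 1, hS]
    have hZ00 : Z 0 0 = S * m 0 := hZm 0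
    have hm0 : m 0 = 1 := by rw [hm]; simpa using hp1
    rw [hZ00, hm0]
    have h0 := hSpos.ne'
    field_simp
    ring
  have e3 : Z 3 0 / Z 0 0 - 3 * (Z 2 0 * Z 1 0) / Z 0 0 ^ 2 + 2 * (Z 1 0 / Z 0 0) ^ 3
      = ∑ a, p a * (c a - μ) ^ 3 := by
    have : ∑ a, p a * (c a - μ) ^ 3
        = ∑ a, ((p a * c a ^ 3 - 3 * μ * (p a * c a ^ 2)) + (3 * μ ^ 2 * (p a * c a) - μ ^ 3 * p a)) := by
      apply Finset.sum_congr rfl; intro a _; ring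
    rw [this, Finset.sum_add_distrib, Finset.sum_sub_distrib, Finset.sum_sub_distrib,
      ← Finset.mul_sum, ← Finset.mul_sum, ← Finset.mul_sum, hp1, ← hμ']
    have hm3 : ∑ a, p a * c a ^ 3 = m 3 := rfl
    have hm2 : ∑ a, p a * c a ^ 2 = m 2 := rfl
    rw [hm3, hm2, hZm 3, hZm 2, hZm 1, hS, hZm 0]
    have hm0 : m 0 = 1 := by rw [hm]; simpa using hp1
    rw [hm0]
    have h0 := hSpos.ne'
    field_simp
    ring
  rw [e2, e3]
  -- |c a - μ| ≤ r
  have hcb : ∀ a, |c a - μ| ≤ r := by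
    intro a
    have : c a - μ = ∑ b, p b * (c a - c b) := by
      rw [hμ']
      rw [Finset.sum_congr rfl (fun b _ => by ring : ∀ b ∈ Finset.univ, p b * (c a - c b) = c a * p b - p b * c b)]
      rw [Finset.sum_sub_distrib, ← Finset.mul_sum, hp1]
      ring
    rw [this]
    calc |∑ b, p b * (c a - c b)| ≤ ∑ b, |p b * (c a - c b)| := Finset.abs_sum_le_sum_abs _ _
      _ ≤ ∑ b, p b * r := by
          apply Finset.sum_le_sum
          intro b _
          rw [abs_mul, abs_of_nonneg (hp0 b)]
          exact mul_le_mul_of_nonneg_left (hr a b) (hp0 b)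
      _ = r := by rw [← Finset.sum_mul, hp1, one_mul]
  -- final bound
  calc |∑ a, p a * (c a - μ) ^ 3| ≤ ∑ a, |p a * (c a - μ) ^ 3| := Finset.abs_sum_le_sum_abs _ _
    _ ≤ ∑ a, p a * (r * (c a - μ) ^ 2) := by
        apply Finset.sum_le_sum
        intro a _
        rw [abs_mul, abs_of_nonneg (hp0 a)]
        have : |(c a - μ) ^ 3| = |c a - μ| * (c a - μ) ^ 2 := by
          rw [show (c a - μ) ^ 3 = (c a - μ) * (c a - μ) ^ 2 from by ring, abs_mul,
            abs_of_nonneg (sq_nonneg (c a - μ))]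
        rw [this]
        exact mul_le_mul_of_nonneg_left
          (mul_le_mul_of_nonneg_right (hcb a) (sq_nonneg _)) (hp0 a)
    _ = r * ∑ a, p a * (c a - μ) ^ 2 := by
        rw [Finset.mul_sum]
        apply Finset.sum_congr rfl; intro a _; ring

/-- The dual max-entropy objective on the Boolean hypercube is `4n`-second-order
robust: `|D³h(λ₀)[λ₁,λ₁,λ₁]| ≤ 4n·D²h(λ₀)[λ₁,λ₁]` for all directions
`λ₁` with `‖λ₁‖_∞ ≤ 1`, where the directional derivatives are the derivatives
of `t ↦ h(λ₀ + t·λ₁)` at `t = 0`. -/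
theorem dual_second_order_robust {n : ℕ} (q : (Fin n → Bool) → ℝ)
    (hq0 : ∀ α, 0 ≤ q α) (hq1 : ∑ α, q α = 1)
    (θ : Fin n → ℝ)
    (h : (Fin n → ℝ) → ℝ)
    (hdef : ∀ lam, h lam = Real.log (∑ α : Fin n → Bool,
      q α * Real.exp (∑ i, lam i * ((if α i then (1 : ℝ) else 0) - θ i))))
    (lam₀ lam₁ : Fin n → ℝ) (hlam₁ : ∀ i, |lam₁ i| ≤ 1) :
    |iteratedDeriv 3 (fun t : ℝ => h (lam₀ + t • lam₁)) 0| ≤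
      4 * n * iteratedDeriv 2 (fun t : ℝ => h (lam₀ + t • lam₁)) 0 := by
  classical
  set v : (Fin n → Bool) → Fin n → ℝ := fun α i => (if α i then (1 : ℝ) else 0) - θ i with hv
  set w : (Fin n → Bool) → ℝ := fun α => q α * Real.exp (∑ i, lam₀ i * v α i) with hw
  set c : (Fin n → Bool) → ℝ := fun α => ∑ i, lam₁ i * v α i with hc
  have hfun : (fun t : ℝ => h (lam₀ + t • lam₁))
      = fun t => Real.log (∑ α, w α * Real.exp (t * c α)) := by
    funext t
    rw [hdef]
    congr 1
    apply Finset.sum_congr rfl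
    intro α _
    have e1 : ∑ i, (lam₀ + t • lam₁) i * v α i
        = (∑ i, lam₀ i * v α i) + t * c α := by
      rw [hc, Finset.mul_sum, ← Finset.sum_add_distrib]
      apply Finset.sum_congr rfl
      intro i _
      simp only [Pi.add_apply, Pi.smul_apply, smul_eq_mul]
      ring
    rw [show (∑ i, (lam₀ + t • lam₁) i * ((if α i then (1:ℝ) else 0) - θ i))
        = ∑ i, (lam₀ + t • lam₁) i * v α i from rfl, e1, Real.exp_add, hw]
    ring
  have hw0 : ∀ α, 0 ≤ w α := fun α => mul_nonneg (hq0 α) (Real.exp_nonneg _)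
  have hpos : 0 < ∑ α, w α := by
    obtain ⟨α, hα⟩ : ∃ α, 0 < q α := by
      by_contra hcon
      push_neg at hcon
      have : ∑ α, q α ≤ 0 := Finset.sum_nonpos (fun α _ => hcon α)
      linarith
    refine Finset.sum_pos' (fun β _ => hw0 β) ⟨α, Finset.mem_univ α, ?_⟩
    rw [hw]
    positivity
  have hr : ∀ α β, |c α - c β| ≤ 4 * (n : ℝ) := by
    intro α β
    have e : c α - c β = ∑ i, lam₁ i * ((if α i then (1:ℝ) else 0) - (if β i then (1:ℝ) else 0)) := by
      rw [hc, ← Finset.sum_sub_distrib]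
      apply Finset.sum_congr rfl
      intro i _
      rw [hv]
      ring
    rw [e]
    calc |∑ i, lam₁ i * ((if α i then (1:ℝ) else 0) - (if β i then (1:ℝ) else 0))|
        ≤ ∑ i, |lam₁ i * ((if α i then (1:ℝ) else 0) - (if β i then (1:ℝ) else 0))| :=
          Finset.abs_sum_le_sum_abs _ _
      _ ≤ ∑ _i : Fin n, (1 : ℝ) := by
          apply Finset.sum_le_sum
          intro i _
          rw [abs_mul]
          have h1 : |(if α i then (1:ℝ) else 0) - (if β i then (1:ℝ) else 0)| ≤ 1 := by
            rcases Bool.eq_false_or_eq_true (α i) with h' | h' <;>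
              rcases Bool.eq_false_or_eq_true (β i) with h'' | h'' <;>
              simp [h', h'']
          calc |lam₁ i| * |(if α i then (1:ℝ) else 0) - (if β i then (1:ℝ) else 0)|
              ≤ 1 * 1 := mul_le_mul (hlam₁ i) h1 (abs_nonneg _) zero_le_one
            _ = 1 := one_mul 1
      _ = (n : ℝ) := by simp
      _ ≤ 4 * (n : ℝ) := by
          have : (0 : ℝ) ≤ (n : ℝ) := Nat.cast_nonneg n
          linarith
  rw [hfun]
  exact logsumexp_robust w c hw0 hpos (4 * (n : ℝ)) hr
end

section
/- Let S be a finite dataset with class labels Y_α ∈ 𝒴 and binary protected attributes Z_α ∈ {0,1}, with frequencies n_α, and fix τ ∈ (0,1]. Define weights w(α) = n_α·c(Y_α)/c(Y_α, Z_α) where c(y) = Σ_α 1[Y_α = y]·n_α, c(y,1) = Σ_α 1[Y_α=y, Z_α=1]·n_α, and c(y,0) = (1/τ)·Σ_α 1[Y_α=y, Z_α=0]·n_α, normalized so weights sum to 1. Assume c(y, z) > 0 for all y, z. Then the resulting distribution w satisfies w(Y=y, Z=0) = τ·w(Y=y, Z=1) for every y ∈ 𝒴, and w(Z=0) = τ·w(Z=1),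 and w(Y=y | Z=0) = w(Y=y | Z=1) for every y. -/
open Finset

/-- Guarantees of the reweighting algorithm: the normalized weights
`w(α) = n_α·c(Y_α)/c(Y_α,Z_α)` give a distribution with
`w(Y=y,Z=0) = τ·w(Y=y,Z=1)`, `w(Z=0) = τ·w(Z=1)` and equal conditional label
probabilities across the two protected groups. -/
theorem reweighting_guarantees {ι 𝒴 : Type*} [Fintype ι] [Fintype 𝒴]
    [DecidableEq 𝒴] [Nonempty ι]
    (Yf : ι → 𝒴) (Zf : ι → Bool) (n : ι → ℕ) (hn : ∀ α, 1 ≤ n α)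
    (τ : ℝ) (hτ0 : 0 < τ) (hτ1 : τ ≤ 1)
    (c : 𝒴 → ℝ) (hc : ∀ y, c y = ∑ α, if Yf α = y then (n α : ℝ) else 0)
    (cz : 𝒴 → Bool → ℝ)
    (hcz1 : ∀ y, cz y true =
      ∑ α, if Yf α = y ∧ Zf α = true then (n α : ℝ) else 0)
    (hcz0 : ∀ y, cz y false =
      (1 / τ) * ∑ α, if Yf α = y ∧ Zf α = false then (n α : ℝ) else 0)
    (hczpos : ∀ y z, 0 < cz y z)
    (w : ι → ℝ) (hw : ∀ α, w α = (n α : ℝ) * c (Yf α) / cz (Yf α) (Zf α))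
    (W : ℝ) (hW : W = ∑ α, w α)
    (wn : ι → ℝ) (hwn : ∀ α, wn α = w α / W)
    (wJ : 𝒴 → Bool → ℝ)
    (hwJ : ∀ y z, wJ y z = ∑ α ∈ univ.filter (fun α => Yf α = y ∧ Zf α = z), wn α)
    (margZ : Bool → ℝ)
    (hmargZ : ∀ z, margZ z = ∑ α ∈ univ.filter (fun α => Zf α = z), wn α) :
    (∀ y : 𝒴, wJ y false = τ * wJ y true) ∧
    margZ false = τ * margZ true ∧
    (∀ y : 𝒴, wJ y false / margZ false = wJ y true / margZ true) := by

  -- group sums of n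
  have hsum_true : ∀ y, ∑ α ∈ univ.filter (fun α => Yf α = y ∧ Zf α = true), (n α : ℝ) = cz y true := by
    intro y; rw [hcz1, Finset.sum_filter]
  have hsum_false : ∀ y, ∑ α ∈ univ.filter (fun α => Yf α = y ∧ Zf α = false), (n α : ℝ) = τ * cz y false := by
    intro y; rw [hcz0, Finset.sum_filter]
    field_simp
  have hcpos : ∀ α, 0 < c (Yf α) := by
    intro α
    rw [hc]
    apply Finset.sum_pos' (fun i _ => by positivity)
    refine ⟨α, Finset.mem_univ α, ?_⟩
    simp only [if_pos rfl]
    exact_mod_cast hn α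
  have hWpos : 0 < W := by
    rw [hW]
    apply Finset.sum_pos (fun α _ => ?_) Finset.univ_nonempty
    rw [hw]
    have := hczpos (Yf α) (Zf α)
    have := hcpos α
    have := hn α
    positivity
  have hwJval : ∀ y z, wJ y z = (c y / cz y z) *
      (∑ α ∈ univ.filter (fun α => Yf α = y ∧ Zf α = z), (n α : ℝ)) / W := by
    intro y z
    rw [hwJ]
    have : ∀ α ∈ univ.filter (fun α => Yf α = y ∧ Zf α = z),
        wn α = (c y / cz y z) * (n α : ℝ) / W := by
      intro α hα
      simp only [Finset.mem_filter] at hα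
      rw [hwn, hw, hα.2.1, hα.2.2]
      ring
    rw [Finset.sum_congr rfl this, ← Finset.sum_div, ← Finset.mul_sum]
  have hjt : ∀ y, wJ y true = c y / W := by
    intro y
    rw [hwJval, hsum_true, div_mul_cancel₀ _ (hczpos y true).ne']
  have hjf : ∀ y, wJ y false = τ * (c y / W) := by
    intro y
    rw [hwJval, hsum_false]
    field_simp [(hczpos y false).ne']
  have h1 : ∀ y : 𝒴, wJ y false = τ * wJ y true := by
    intro y; rw [hjf, hjt]
  have hmarg : ∀ z, margZ z = ∑ y, wJ y z := by
    intro z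
    rw [hmargZ]
    rw [← Finset.sum_fiberwise_of_maps_to (g := Yf) (fun α _ => Finset.mem_univ (Yf α)) wn]
    apply Finset.sum_congr rfl
    intro y _
    rw [hwJ]
    apply Finset.sum_congr _ (fun _ _ => rfl)
    ext α
    simp [Finset.mem_filter, and_comm]
  have h2 : margZ false = τ * margZ true := by
    rw [hmarg, hmarg, Finset.mul_sum]
    exact Finset.sum_congr rfl fun y _ => h1 y
  refine ⟨h1, h2, fun y => ?_⟩
  rw [h1 y, h2, mul_div_mul_left _ _ hτ0.ne']
end
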